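/- There exists a constant C > 0 depending only on c and θ such that for every x ≥ 2, every real N with g(Δ₁) ≤ N and 2N + 1 ≤ g(Δ₂), and every integer h ≥ 1, one has |Σ_{N < n ≤ 2N} Λ(n)·(e(−h·m(n+1)) − e(−h·m(n)))| ≤ C·h·N^{γ−1}·max_{N₁ ∈ [N, 2N]} |Σ_{N < n ≤ N₁} Λ(n)·e(h·m(n))|, where the sums run over integers n in the indicated ranges. -/

import Mathlib

open Real

/-- `Δ₁ = exp(π·⌊(log x)/π⌋ + arctan 1)` -/
noncomputable def Δ₁ (x : ℝ) : ℝ :=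
  Real.exp (Real.pi * (⌊Real.log x / Real.pi⌋ : ℝ) + Real.arctan 1)

/-- `Δ₂ = exp(π·⌊(log x)/π⌋ + arctan 2)` -/
noncomputable def Δ₂ (x : ℝ) : ℝ :=
  Real.exp (Real.pi * (⌊Real.log x / Real.pi⌋ : ℝ) + Real.arctan 2)

/-- `g(y) = y^c · (tan(log y))^θ` (real powers). -/
noncomputable def g (c θ y : ℝ) : ℝ := y ^ c * Real.tan (Real.log y) ^ θ

/-- `e(u) = exp(2πiu)`. -/
noncomputable def e (u : ℝ) : ℂ := Complex.exp (2 * (Real.pi : ℂ) * Complex.I * (u : ℂ))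

/-! ### Auxiliary lemmas -/

section Aux

lemma e_add (u v : ℝ) : e (u + v) = e u * e v := by
  unfold e; rw [← Complex.exp_add]; push_cast; ring_nf

lemma e_zero : e 0 = 1 := by simp [e]

lemma abs_e (u : ℝ) : ‖e u‖ = 1 := by
  unfold e
  rw [Complex.norm_exp]
  norm_num [Complex.mul_re]

lemma abs_e_sub_one (v : ℝ) : ‖e v - 1‖ ≤ 2 * π * |v| := by
  have h1 : e v - 1 = Complex.ofReal (Real.cos (2*π*v) - 1) + Complex.ofReal (Real.sin (2*π*v)) * Complex.I := by
    unfold e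
    have : 2 * (Real.pi : ℂ) * Complex.I * (v : ℂ) = ((2*π*v : ℝ) : ℂ) * Complex.I := by
      push_cast; ring
    rw [this, Complex.exp_mul_I]
    push_cast [Complex.ofReal_cos, Complex.ofReal_sin]
    ring
  rw [h1, Complex.norm_def, Complex.normSq_add_mul_I]
  set t := 2*π*v with ht
  have h2 : (Real.cos t - 1)^2 + (Real.sin t)^2 ≤ t^2 := by
    have := Real.one_sub_sq_div_two_le_cos (x := t)
    nlinarith [Real.sin_sq_add_cos_sq t]
  calc Real.sqrt ((Real.cos t - 1)^2 + (Real.sin t)^2) ≤ Real.sqrt (t^2) :=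
        Real.sqrt_le_sqrt h2
    _ = |t| := Real.sqrt_sq_eq_abs t
    _ = 2*π*|v| := by rw [ht, abs_mul]; congr 1; rw [abs_of_nonneg (by positivity)]

lemma abs_e_sub_e (u v : ℝ) : ‖e u - e v‖ ≤ 2 * π * |u - v| := by
  have : e u - e v = e v * (e (u - v) - 1) := by
    rw [mul_sub, ← e_add]; ring_nf
  rw [this, norm_mul, abs_e, one_mul]
  exact abs_e_sub_one _

lemma conj_e (u : ℝ) : (starRingEnd ℂ) (e u) = e (-u) := by
  unfold e
  rw [← Complex.exp_conj]
  congr 1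
  simp only [map_mul, Complex.conj_I, Complex.conj_ofReal, map_ofNat]
  push_cast
  ring

lemma red {x : ℝ} {y : ℝ} (h1 : Δ₁ x ≤ y) (h2 : y ≤ Δ₂ x) :
    (Real.log y - (⌊Real.log x / Real.pi⌋ : ℤ) * π ∈ Set.Icc (Real.arctan 1) (Real.arctan 2)) ∧
    Real.tan (Real.log y) = Real.tan (Real.log y - (⌊Real.log x / Real.pi⌋ : ℤ) * π) ∧
    Real.cos (Real.log y) ≠ 0 := by
  set k : ℤ := ⌊Real.log x / Real.pi⌋ with hk
  have hΔ₁pos : 0 < Δ₁ x := Real.exp_pos _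
  have hy0 : 0 < y := lt_of_lt_of_le hΔ₁pos h1
  have hlog1 : π * (k:ℝ) + Real.arctan 1 ≤ Real.log y := by
    calc π * (k:ℝ) + Real.arctan 1 = Real.log (Δ₁ x) := by rw [Δ₁, Real.log_exp]
      _ ≤ Real.log y := Real.log_le_log hΔ₁pos h1
  have hlog2 : Real.log y ≤ π * (k:ℝ) + Real.arctan 2 := by
    calc Real.log y ≤ Real.log (Δ₂ x) := Real.log_le_log hy0 h2
      _ = π * (k:ℝ) + Real.arctan 2 := by rw [Δ₂, Real.log_exp]
  set s : ℝ := Real.log y - (k:ℝ) * π with hs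
  have hsmem : s ∈ Set.Icc (Real.arctan 1) (Real.arctan 2) := by
    constructor <;> [linarith; linarith]
  have htan : Real.tan (Real.log y) = Real.tan s := by
    rw [hs]
    exact (Real.tan_periodic.sub_int_mul_eq k).symm
  have harc1 : Real.arctan 1 = π/4 := Real.arctan_one
  have hs0 : 0 < s := lt_of_lt_of_le (by rw [harc1] at *; positivity) hsmem.1
  have hs2 : s < π/2 := lt_of_le_of_lt hsmem.2 (Real.arctan_lt_pi_div_two 2)
  have hcos : Real.cos (Real.log y) ≠ 0 := by
    intro hc
    rw [Real.cos_eq_zero_iff] at hc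
    obtain ⟨n, hn⟩ := hc
    have hseq : s = ((2*(n - k) + 1 : ℤ) : ℝ) * π / 2 := by
      rw [hs, hn]; push_cast; ring
    have hπ : 0 < π := Real.pi_pos
    have h01 : (0:ℝ) < ((2*(n-k)+1 : ℤ):ℝ) := by
      by_contra hcon
      push_neg at hcon
      nlinarith [hseq, hs0]
    have h02 : ((2*(n-k)+1 : ℤ):ℝ) < 1 := by
      by_contra hcon
      push_neg at hcon
      nlinarith [hseq, hs2]
    have : (0:ℤ) < 2*(n-k)+1 := by exact_mod_cast h01
    have : (2*(n-k)+1 : ℤ) < 1 := by exact_mod_cast h02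
    omega
  exact ⟨hsmem, htan, hcos⟩

lemma tan_bounds {x y : ℝ} (h1 : Δ₁ x ≤ y) (h2 : y ≤ Δ₂ x) :
    1 ≤ Real.tan (Real.log y) ∧ Real.tan (Real.log y) ≤ 2 := by
  obtain ⟨hsmem, htan, -⟩ := red h1 h2
  set s := Real.log y - (⌊Real.log x / Real.pi⌋ : ℤ) * π
  have hmem : s ∈ Set.Ioo (-(π/2)) (π/2) :=
    ⟨lt_of_lt_of_le (Real.neg_pi_div_two_lt_arctan 1) hsmem.1,
     lt_of_le_of_lt hsmem.2 (Real.arctan_lt_pi_div_two 2)⟩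
  have ha1 : Real.arctan 1 ∈ Set.Ioo (-(π/2)) (π/2) :=
    ⟨Real.neg_pi_div_two_lt_arctan 1, Real.arctan_lt_pi_div_two 1⟩
  have ha2 : Real.arctan 2 ∈ Set.Ioo (-(π/2)) (π/2) :=
    ⟨Real.neg_pi_div_two_lt_arctan 2, Real.arctan_lt_pi_div_two 2⟩
  constructor
  · have := Real.strictMonoOn_tan.monotoneOn ha1 hmem hsmem.1
    rwa [Real.tan_arctan, ← htan] at this
  · have := Real.strictMonoOn_tan.monotoneOn hmem ha2 hsmem.2
    rwa [Real.tan_arctan, ← htan] at this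

lemma tan_mono {x y₁ y₂ : ℝ} (h1 : Δ₁ x ≤ y₁) (h12 : y₁ ≤ y₂) (h2 : y₂ ≤ Δ₂ x) :
    Real.tan (Real.log y₁) ≤ Real.tan (Real.log y₂) := by
  obtain ⟨hs1, ht1, -⟩ := red h1 (le_trans h12 h2)
  obtain ⟨hs2, ht2, -⟩ := red (le_trans h1 h12) h2
  set k : ℤ := ⌊Real.log x / Real.pi⌋
  have hy1 : (0:ℝ) < y₁ := lt_of_lt_of_le (Real.exp_pos _) h1
  have hlog : Real.log y₁ ≤ Real.log y₂ := Real.log_le_log hy1 h12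
  rw [ht1, ht2]
  have m1 : Real.log y₁ - (k:ℝ)*π ∈ Set.Ioo (-(π/2)) (π/2) :=
    ⟨lt_of_lt_of_le (Real.neg_pi_div_two_lt_arctan 1) hs1.1,
     lt_of_le_of_lt hs1.2 (Real.arctan_lt_pi_div_two 2)⟩
  have m2 : Real.log y₂ - (k:ℝ)*π ∈ Set.Ioo (-(π/2)) (π/2) :=
    ⟨lt_of_lt_of_le (Real.neg_pi_div_two_lt_arctan 1) hs2.1,
     lt_of_le_of_lt hs2.2 (Real.arctan_lt_pi_div_two 2)⟩
  exact Real.strictMonoOn_tan.monotoneOn m1 m2 (by linarith)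

lemma tan_log_Δ₁ (x : ℝ) : Real.tan (Real.log (Δ₁ x)) = 1 := by
  obtain ⟨hsmem, htan, -⟩ := red (le_refl (Δ₁ x)) (by
    apply Real.exp_le_exp.2
    have := Real.arctan_lt_pi_div_two 1
    have h12 : Real.arctan 1 ≤ Real.arctan 2 := Real.arctan_strictMono.monotone (by norm_num)
    linarith)
  rw [htan]
  have : Real.log (Δ₁ x) - (⌊Real.log x / Real.pi⌋ : ℤ) * π = Real.arctan 1 := by
    rw [Δ₁, Real.log_exp]; ring
  rw [this, Real.tan_arctan]

lemma tan_log_Δ₂ (x : ℝ) : Real.tan (Real.log (Δ₂ x)) = 2 := by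
  obtain ⟨hsmem, htan, -⟩ := red (x := x) (y := Δ₂ x) (by
    apply Real.exp_le_exp.2
    have h12 : Real.arctan 1 ≤ Real.arctan 2 := Real.arctan_strictMono.monotone (by norm_num)
    linarith) (le_refl _)
  rw [htan]
  have : Real.log (Δ₂ x) - (⌊Real.log x / Real.pi⌋ : ℤ) * π = Real.arctan 2 := by
    rw [Δ₂, Real.log_exp]; ring
  rw [this, Real.tan_arctan]

lemma rpow_gap {c z y₁ y₂ : ℝ} (hc : 1 < c) (hz : 0 < z) (h1 : z ≤ y₁) (h12 : y₁ < y₂) :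
    c * z ^ (c - 1) * (y₂ - y₁) ≤ y₂ ^ c - y₁ ^ c := by
  have hcont : ContinuousOn (fun t : ℝ => t ^ c) (Set.Icc y₁ y₂) := by
    intro t ht
    exact ((Real.hasDerivAt_rpow_const (p := c)
      (Or.inl (by nlinarith [ht.1] : t ≠ 0))).continuousAt).continuousWithinAt
  have hderiv : ∀ t ∈ Set.Ioo y₁ y₂, HasDerivAt (fun t : ℝ => t ^ c) (c * t ^ (c-1)) t := by
    intro t ht
    exact Real.hasDerivAt_rpow_const (Or.inl (by nlinarith [ht.1] : t ≠ 0))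
  obtain ⟨ξ, hξ, hξeq⟩ := exists_hasDerivAt_eq_slope (fun t : ℝ => t ^ c)
    (fun t => c * t ^ (c-1)) h12 hcont hderiv
  have hξz : z ≤ ξ := le_trans h1 hξ.1.le
  have h1' : c * z ^ (c-1) ≤ c * ξ ^ (c-1) := by
    apply mul_le_mul_of_nonneg_left _ (by linarith)
    exact Real.rpow_le_rpow hz.le hξz (by linarith)
  have hslope : c * ξ ^ (c-1) * (y₂ - y₁) = y₂ ^ c - y₁ ^ c := by
    rw [hξeq, div_mul_eq_mul_div, mul_div_assoc, div_self (by linarith : y₂ - y₁ ≠ 0), mul_one]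
  nlinarith [h1', sub_pos.2 h12]

lemma g_gap {c θ x y₁ y₂ : ℝ} (hc₁ : 1 < c) (hθ : 1 < θ)
    (ha : Δ₁ x ≤ y₁) (hb : y₂ ≤ Δ₂ x) (h12 : y₁ < y₂) :
    c * (Δ₁ x) ^ (c - 1) * (y₂ - y₁) ≤ g c θ y₂ - g c θ y₁ := by
  have hy1 : (0:ℝ) < y₁ := lt_of_lt_of_le (Real.exp_pos _) ha
  have hy2 : (0:ℝ) < y₂ := lt_trans hy1 h12
  have hb1 : y₁ ≤ Δ₂ x := le_trans h12.le hb
  have ha2 : Δ₁ x ≤ y₂ := le_trans ha h12.le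
  obtain ⟨hT1a, hT1b⟩ := tan_bounds ha hb1
  obtain ⟨hT2a, hT2b⟩ := tan_bounds ha2 hb
  have hTmono := tan_mono ha h12.le hb
  set T₁ := Real.tan (Real.log y₁)
  set T₂ := Real.tan (Real.log y₂)
  have hθ0 : (0:ℝ) ≤ θ := by linarith
  have hTθ : T₁ ^ θ ≤ T₂ ^ θ := Real.rpow_le_rpow (by linarith) hTmono hθ0
  have hT1θ : (1:ℝ) ≤ T₁ ^ θ := by
    calc (1:ℝ) = 1 ^ θ := (Real.one_rpow θ).symm
      _ ≤ T₁ ^ θ := Real.rpow_le_rpow (by norm_num) hT1a hθ0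
  have hyc : y₁ ^ c ≤ y₂ ^ c := Real.rpow_le_rpow hy1.le h12.le (by linarith)
  have hΔpos : (0:ℝ) < Δ₁ x := Real.exp_pos _
  have hgap := rpow_gap hc₁ hΔpos ha h12
  have hy2c : (0:ℝ) ≤ y₂ ^ c := (Real.rpow_pos_of_pos hy2 c).le
  have key : g c θ y₂ - g c θ y₁ ≥ (y₂ ^ c - y₁ ^ c) * T₁ ^ θ := by
    unfold g
    have : y₂ ^ c * T₂ ^ θ ≥ y₂ ^ c * T₁ ^ θ := by
      apply mul_le_mul_of_nonneg_left hTθ hy2c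
    nlinarith
  nlinarith [mul_le_mul_of_nonneg_right hT1θ (sub_nonneg.2 hyc)]

lemma u_convex (x : ℝ) :
    ConvexOn ℝ (Set.Icc (Δ₁ x) (Δ₂ x)) (fun y => Real.tan (Real.log y)) := by
  set D := Set.Icc (Δ₁ x) (Δ₂ x) with hD
  have hint : interior D = Set.Ioo (Δ₁ x) (Δ₂ x) := interior_Icc
  have hu : ∀ y ∈ D, HasDerivAt (fun y => Real.tan (Real.log y))
      (1 / Real.cos (Real.log y) ^ 2 * (1/y)) y := by
    intro y hy
    have hy0 : (0:ℝ) < y := lt_of_lt_of_le (Real.exp_pos _) hy.1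
    have hcos : Real.cos (Real.log y) ≠ 0 := (red hy.1 hy.2).2.2
    have h1 : HasDerivAt Real.log (1/y) y := by
      simpa [one_div] using Real.hasDerivAt_log hy0.ne'
    exact (Real.hasDerivAt_tan hcos).comp y h1
  set ψ : ℝ → ℝ := fun y => Real.cos (Real.log y) ^ 2 * y with hψ
  have hψd : ∀ y ∈ D, HasDerivAt ψ
      (Real.cos (Real.log y) ^ 2 - 2 * Real.sin (Real.log y) * Real.cos (Real.log y)) y := by
    intro y hy
    have hy0 : (0:ℝ) < y := lt_of_lt_of_le (Real.exp_pos _) hy.1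
    have h1 : HasDerivAt Real.log (1/y) y := by
      simpa [one_div] using Real.hasDerivAt_log hy0.ne'
    have h2 : HasDerivAt (fun y => Real.cos (Real.log y)) (-Real.sin (Real.log y) * (1/y)) y :=
      (Real.hasDerivAt_cos (Real.log y)).comp y h1
    have h3 : HasDerivAt (fun y => Real.cos (Real.log y) ^ 2)
        (2 * Real.cos (Real.log y) * (-Real.sin (Real.log y) * (1/y))) y := by
      simpa [pow_one] using h2.fun_pow 2
    have h4 := h3.fun_mul (hasDerivAt_id' y)
    refine h4.congr_deriv ?_
    field_simp
    ring
  have hψanti : AntitoneOn ψ D := by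
    apply antitoneOn_of_deriv_nonpos (convex_Icc _ _)
    · exact fun y hy => ((hψd y hy).continuousAt).continuousWithinAt
    · intro y hy
      rw [hint] at hy
      exact ((hψd y ⟨hy.1.le, hy.2.le⟩).differentiableAt).differentiableWithinAt
    · intro y hy
      rw [hint] at hy
      have hyD : y ∈ D := ⟨hy.1.le, hy.2.le⟩
      rw [(hψd y hyD).deriv]
      have hcos : Real.cos (Real.log y) ≠ 0 := (red hyD.1 hyD.2).2.2
      have htan : 1 ≤ Real.tan (Real.log y) := (tan_bounds hyD.1 hyD.2).1
      have hsc : Real.sin (Real.log y) * Real.cos (Real.log y)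
          = Real.tan (Real.log y) * Real.cos (Real.log y) ^ 2 := by
        rw [Real.tan_eq_sin_div_cos]; field_simp
      nlinarith [sq_nonneg (Real.cos (Real.log y)), pow_pos (abs_pos.2 hcos) 2]
  apply MonotoneOn.convexOn_of_deriv (convex_Icc _ _)
  · exact fun y hy => ((hu y hy).continuousAt).continuousWithinAt
  · intro y hy
    rw [hint] at hy
    exact ((hu y ⟨hy.1.le, hy.2.le⟩).differentiableAt).differentiableWithinAt
  · intro y₁ hy₁ y₂ hy₂ h12
    rw [hint] at hy₁ hy₂
    have hD₁ : y₁ ∈ D := ⟨hy₁.1.le, hy₁.2.le⟩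
    have hD₂ : y₂ ∈ D := ⟨hy₂.1.le, hy₂.2.le⟩
    rw [(hu y₁ hD₁).deriv, (hu y₂ hD₂).deriv]
    have hy10 : (0:ℝ) < y₁ := lt_of_lt_of_le (Real.exp_pos _) hD₁.1
    have hy20 : (0:ℝ) < y₂ := lt_of_lt_of_le (Real.exp_pos _) hD₂.1
    have hc1 : Real.cos (Real.log y₁) ≠ 0 := (red hD₁.1 hD₁.2).2.2
    have hc2 : Real.cos (Real.log y₂) ≠ 0 := (red hD₂.1 hD₂.2).2.2
    have e1 : 1 / Real.cos (Real.log y₁) ^ 2 * (1/y₁) = 1 / ψ y₁ := by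
      rw [hψ]; field_simp
    have e2 : 1 / Real.cos (Real.log y₂) ^ 2 * (1/y₂) = 1 / ψ y₂ := by
      rw [hψ]; field_simp
    rw [e1, e2]
    have hψ2pos : 0 < ψ y₂ := by
      have h2 : (0:ℝ) < Real.cos (Real.log y₂) ^ 2 :=
        lt_of_le_of_ne (sq_nonneg _) (Ne.symm (pow_ne_zero 2 hc2))
      exact mul_pos h2 hy20
    exact one_div_le_one_div_of_le hψ2pos (hψanti hD₁ hD₂ h12)

lemma g_mid {c θ x y₁ y₂ : ℝ} (hc₁ : 1 < c) (hθ : 1 < θ)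
    (ha : Δ₁ x ≤ y₁) (h12 : y₁ ≤ y₂) (hb : y₂ ≤ Δ₂ x) :
    g c θ ((y₁ + y₂)/2) ≤ (g c θ y₁ + g c θ y₂)/2 := by
  have hy1 : (0:ℝ) < y₁ := lt_of_lt_of_le (Real.exp_pos _) ha
  have hy2 : (0:ℝ) < y₂ := lt_of_le_of_lt' h12 hy1
  set w := (y₁ + y₂)/2 with hw
  have hwmem : Δ₁ x ≤ w ∧ w ≤ Δ₂ x := ⟨by rw [hw]; linarith, by rw [hw]; linarith⟩
  have hw0 : (0:ℝ) < w := by rw [hw]; linarith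
  set T₁ := Real.tan (Real.log y₁) with hT1
  set T₂ := Real.tan (Real.log y₂) with hT2
  set Tw := Real.tan (Real.log w) with hTw
  obtain ⟨hT1a, hT1b⟩ := tan_bounds ha (le_trans h12 hb)
  obtain ⟨hT2a, hT2b⟩ := tan_bounds (le_trans ha h12) hb
  obtain ⟨hTwa, hTwb⟩ := tan_bounds hwmem.1 hwmem.2
  have hθ0 : (0:ℝ) ≤ θ := by linarith
  have hrc := convexOn_rpow (le_of_lt hc₁)
  have h1 : w ^ c ≤ (y₁ ^ c + y₂ ^ c)/2 := by
    have := hrc.2 (Set.mem_Ici.2 hy1.le) (Set.mem_Ici.2 hy2.le)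
      (by norm_num : (0:ℝ) ≤ 1/2) (by norm_num : (0:ℝ) ≤ 1/2) (by norm_num)
    simp only [smul_eq_mul] at this
    calc w ^ c = ((1/2)*y₁ + (1/2)*y₂) ^ c := by rw [hw]; ring_nf
      _ ≤ (1/2)*y₁^c + (1/2)*y₂^c := this
      _ = (y₁ ^ c + y₂ ^ c)/2 := by ring
  have h2 : Tw ≤ (T₁ + T₂)/2 := by
    have := (u_convex x).2 (Set.mem_Icc.2 ⟨ha, le_trans h12 hb⟩)
      (Set.mem_Icc.2 ⟨le_trans ha h12, hb⟩)
      (by norm_num : (0:ℝ) ≤ 1/2) (by norm_num : (0:ℝ) ≤ 1/2) (by norm_num)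
    simp only [smul_eq_mul] at this
    calc Tw = Real.tan (Real.log ((1/2)*y₁ + (1/2)*y₂)) := by rw [hTw, hw]; ring_nf
      _ ≤ (1/2)*T₁ + (1/2)*T₂ := this
      _ = (T₁ + T₂)/2 := by ring
  have hrθ := convexOn_rpow (le_of_lt hθ)
  have h3 : Tw ^ θ ≤ (T₁ ^ θ + T₂ ^ θ)/2 := by
    have hmid : ((T₁ + T₂)/2) ^ θ ≤ (T₁ ^ θ + T₂ ^ θ)/2 := by
      have := hrθ.2 (Set.mem_Ici.2 (by linarith : (0:ℝ) ≤ T₁))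
        (Set.mem_Ici.2 (by linarith : (0:ℝ) ≤ T₂))
        (by norm_num : (0:ℝ) ≤ 1/2) (by norm_num : (0:ℝ) ≤ 1/2) (by norm_num)
      simp only [smul_eq_mul] at this
      calc ((T₁ + T₂)/2) ^ θ = ((1/2)*T₁ + (1/2)*T₂) ^ θ := by ring_nf
        _ ≤ (1/2)*T₁^θ + (1/2)*T₂^θ := this
        _ = (T₁ ^ θ + T₂ ^ θ)/2 := by ring
    exact le_trans (Real.rpow_le_rpow (by linarith) h2 hθ0) hmid
  have hb1θ : (1:ℝ) ≤ T₁ ^ θ := by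
    calc (1:ℝ) = 1 ^ θ := (Real.one_rpow θ).symm
      _ ≤ T₁ ^ θ := Real.rpow_le_rpow (by norm_num) hT1a hθ0
  have hbmono : T₁ ^ θ ≤ T₂ ^ θ :=
    Real.rpow_le_rpow (by linarith) (tan_mono ha h12 hb) hθ0
  have hamono : y₁ ^ c ≤ y₂ ^ c := Real.rpow_le_rpow hy1.le h12 (by linarith)
  have ha1 : (0:ℝ) < y₁ ^ c := Real.rpow_pos_of_pos hy1 c
  have hTw0 : (0:ℝ) ≤ Tw ^ θ := (Real.rpow_nonneg (by linarith) θ)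
  have hAB : w ^ c * Tw ^ θ ≤ ((y₁ ^ c + y₂ ^ c)/2) * ((T₁ ^ θ + T₂ ^ θ)/2) := by
    apply mul_le_mul h1 h3 hTw0 (by positivity)
  have hfinal : ((y₁ ^ c + y₂ ^ c)/2) * ((T₁ ^ θ + T₂ ^ θ)/2)
      ≤ (y₁ ^ c * T₁ ^ θ + y₂ ^ c * T₂ ^ θ)/2 := by
    nlinarith [mul_nonneg (sub_nonneg.2 hamono) (sub_nonneg.2 hbmono)]
  unfold g
  calc w ^ c * Tw ^ θ ≤ _ := hAB
    _ ≤ _ := hfinal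

lemma const_est {c θ x N : ℝ} (hc₁ : 1 < c) (hc₂ : c < 12/11) (hθ : 1 < θ)
    (hN0 : 0 < N) (hN2 : N ≤ g c θ (Δ₂ x)) :
    2*π*(1/(c*(Δ₁ x)^(c-1))) ≤ 2*π*Real.exp 1*(2:ℝ)^θ * N^(1/c-1) := by
  have hπ : (0:ℝ) < π := Real.pi_pos
  set Δ : ℝ := Δ₁ x with hΔ
  have hΔpos : 0 < Δ := Real.exp_pos _
  set d : ℝ := Real.arctan 2 - Real.arctan 1 with hd
  have hd0 : 0 ≤ d := by
    rw [hd]; have := Real.arctan_strictMono.monotone (by norm_num : (1:ℝ) ≤ 2); linarith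
  have hd2 : d ≤ 2 := by
    rw [hd]
    have h1 := Real.arctan_lt_pi_div_two 2
    have h2 : 0 ≤ Real.arctan 1 := by rw [Real.arctan_one]; positivity
    have := Real.pi_le_four
    linarith
  have hΔ₂ : Δ₂ x = Δ * Real.exp d := by
    rw [hΔ, Δ₁, Δ₂, ← Real.exp_add, hd]; ring_nf
  have hgΔ₂ : g c θ (Δ₂ x) = (Δ₂ x) ^ c * (2:ℝ) ^ θ := by
    rw [g, tan_log_Δ₂]
  have hΔ₂pos : (0:ℝ) < Δ₂ x := Real.exp_pos _
  have hc0 : (0:ℝ) < c := by linarith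
  have hc0' : (0:ℝ) < c := by linarith
  have hp0 : 0 ≤ (c-1)/c := div_nonneg (by linarith) (by linarith)
  have h2θ1 : (1:ℝ) ≤ (2:ℝ)^θ := Real.one_le_rpow (by norm_num) (by linarith)
  have hchain : N ^ ((c-1)/c) ≤ Δ ^ (c-1) * Real.exp 1 * (2:ℝ)^θ := by
    have s1 : N ^ ((c-1)/c) ≤ (g c θ (Δ₂ x)) ^ ((c-1)/c) :=
      Real.rpow_le_rpow hN0.le hN2 hp0
    have s2 : (g c θ (Δ₂ x)) ^ ((c-1)/c) = (Δ₂ x) ^ (c-1) * ((2:ℝ)^θ) ^ ((c-1)/c) := by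
      rw [hgΔ₂, Real.mul_rpow (Real.rpow_nonneg hΔ₂pos.le c) (Real.rpow_nonneg (by norm_num) θ),
        ← Real.rpow_mul hΔ₂pos.le]
      congr 2
      field_simp
    have s3 : ((2:ℝ)^θ) ^ ((c-1)/c) ≤ (2:ℝ)^θ := by
      rw [← Real.rpow_mul (by norm_num : (0:ℝ) ≤ 2)]
      apply Real.rpow_le_rpow_of_exponent_le (by norm_num)
      have hle1 : (c-1)/c ≤ 1 := by rw [div_le_one hc0']; linarith
      nlinarith
    have s4 : (Δ₂ x) ^ (c-1) = Δ ^ (c-1) * Real.exp (d*(c-1)) := by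
      rw [hΔ₂, Real.mul_rpow hΔpos.le (Real.exp_pos d).le, Real.exp_mul]
    have s5 : Real.exp (d*(c-1)) ≤ Real.exp 1 := by
      apply Real.exp_le_exp.2
      nlinarith
    have hΔc : (0:ℝ) < Δ ^ (c-1) := Real.rpow_pos_of_pos hΔpos _
    have hΔ₂c : (0:ℝ) < (Δ₂ x) ^ (c-1) := Real.rpow_pos_of_pos hΔ₂pos _
    calc N ^ ((c-1)/c) ≤ (Δ₂ x) ^ (c-1) * ((2:ℝ)^θ) ^ ((c-1)/c) := by rw [← s2]; exact s1
      _ ≤ (Δ₂ x) ^ (c-1) * (2:ℝ)^θ := by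
          exact mul_le_mul_of_nonneg_left s3 hΔ₂c.le
      _ = Δ ^ (c-1) * Real.exp (d*(c-1)) * (2:ℝ)^θ := by rw [s4]
      _ ≤ Δ ^ (c-1) * Real.exp 1 * (2:ℝ)^θ := by
          apply mul_le_mul_of_nonneg_right _ (by positivity)
          exact mul_le_mul_of_nonneg_left s5 hΔc.le
  have hrw : N ^ (1/c-1) = 1 / N ^ ((c-1)/c) := by
    have hexp : 1/c - 1 = -((c-1)/c) := by field_simp; ring
    rw [hexp, Real.rpow_neg hN0.le, one_div]
  rw [hrw]
  have hP : (0:ℝ) < N ^ ((c-1)/c) := Real.rpow_pos_of_pos hN0 _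
  have hΔc : (0:ℝ) < Δ ^ (c-1) := Real.rpow_pos_of_pos hΔpos _
  have hA : (0:ℝ) < c * Δ ^ (c-1) := by positivity
  rw [mul_one_div, mul_one_div, div_le_div_iff₀ hA hP]
  have hexppos : (0:ℝ) < Real.exp 1 := Real.exp_pos 1
  have h1 := mul_le_mul_of_nonneg_left hchain (by positivity : (0:ℝ) ≤ 2*π)
  have h2 : 0 ≤ 2*π*((c-1)*(Δ^(c-1)*(Real.exp 1*(2:ℝ)^θ))) := by
    apply mul_nonneg (by positivity)
    apply mul_nonneg (by linarith)
    positivity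
  nlinarith [h1, h2]

lemma ioo_succ (a b : ℕ) (hab : a ≤ b) : Finset.Ioo a (b+1) = Finset.Ioc a b := by
  ext n; simp only [Finset.mem_Ioo, Finset.mem_Ioc]; omega

lemma abel_ioc (f W : ℕ → ℂ) (a : ℕ) : ∀ b, a ≤ b →
    ∑ n ∈ Finset.Ioc a b, f n * W n =
      (∑ k ∈ Finset.Ioo a b, (∑ n ∈ Finset.Ioc a k, f n) * (W k - W (k+1)))
        + (∑ n ∈ Finset.Ioc a b, f n) * W b := by
  intro b
  induction b with
  | zero => intro h; interval_cases a; simp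
  | succ b ih =>
    intro hab
    rcases Nat.lt_or_ge a (b+1) with hlt | hge
    · have hab' : a ≤ b := by omega
      have hIoc : Finset.Ioc a (b+1) = insert (b+1) (Finset.Ioc a b) := by
        ext n; simp only [Finset.mem_Ioc, Finset.mem_insert]; omega
      have hnotmem : (b+1) ∉ Finset.Ioc a b := by simp
      rw [hIoc, Finset.sum_insert hnotmem, Finset.sum_insert hnotmem, ih hab']
      rw [ioo_succ a b hab']
      rcases Nat.eq_or_lt_of_le hab' with heq | hlt'
      · subst heq
        simp
      · have hIocb : Finset.Ioc a b = insert b (Finset.Ioo a b) := by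
          ext n; simp only [Finset.mem_Ioc, Finset.mem_insert, Finset.mem_Ioo]; omega
        have hbnot : b ∉ Finset.Ioo a b := by simp
        simp only [hIocb, Finset.sum_insert hbnot]
        ring
    · have : a = b + 1 := by omega
      subst this
      simp

lemma telescope_ioo (δ : ℕ → ℝ) (a : ℕ) : ∀ b, a < b →
    ∑ k ∈ Finset.Ioo a b, (δ k - δ (k+1)) = δ (a+1) - δ b := by
  intro b
  induction b with
  | zero => omega
  | succ b ih =>
    intro hab
    rcases Nat.lt_or_ge a b with hlt | hge
    · rw [ioo_succ a b hlt.le]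
      have hIocb : Finset.Ioc a b = insert b (Finset.Ioo a b) := by
        ext n; simp only [Finset.mem_Ioc, Finset.mem_insert, Finset.mem_Ioo]; omega
      rw [hIocb, Finset.sum_insert (by simp), ih hlt]
      ring
    · have : a = b := by omega
      subst this
      rw [ioo_succ a a le_rfl, Finset.Ioc_self]
      simp

lemma abel_est (f W : ℕ → ℂ) (δ : ℕ → ℝ) (a b : ℕ) (hab : a < b) (M K : ℝ)
    (hK : 0 ≤ K)
    (hS : ∀ k, a < k → k ≤ b → ‖∑ n ∈ Finset.Ioc a k, f n‖ ≤ M)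
    (hWd : ∀ k, a < k → k < b → ‖W k - W (k+1)‖ ≤ K * (δ k - δ (k+1)))
    (hWb : ‖W b‖ ≤ K * δ b) :
    ‖∑ n ∈ Finset.Ioc a b, f n * W n‖ ≤ K * δ (a+1) * M := by
  have hM : 0 ≤ M := le_trans (norm_nonneg _) (hS b hab le_rfl)
  rw [abel_ioc f W a b hab.le]
  calc ‖_‖ ≤ ‖∑ k ∈ Finset.Ioo a b,
          (∑ n ∈ Finset.Ioc a k, f n) * (W k - W (k+1))‖
        + ‖(∑ n ∈ Finset.Ioc a b, f n) * W b‖ := norm_add_le _ _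
    _ ≤ (∑ k ∈ Finset.Ioo a b, M * (K * (δ k - δ (k+1)))) + M * (K * δ b) := by
        apply add_le_add
        · refine le_trans (norm_sum_le _ _) (Finset.sum_le_sum ?_)
          intro k hk
          rw [Finset.mem_Ioo] at hk
          rw [norm_mul]
          exact mul_le_mul (hS k hk.1 hk.2.le) (hWd k hk.1 hk.2)
            (norm_nonneg _) hM
        · rw [norm_mul]
          exact mul_le_mul (hS b hab le_rfl) hWb (norm_nonneg _) hM
    _ = M * K * ((∑ k ∈ Finset.Ioo a b, (δ k - δ (k+1))) + δ b) := by
        rw [mul_add, Finset.mul_sum]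
        congr 1
        · apply Finset.sum_congr rfl
          intro k _
          ring
        · ring
    _ = M * K * δ (a+1) := by rw [telescope_ioo δ a b hab]; ring
    _ = K * δ (a+1) * M := by ring

lemma finsum_eq_sum_Ioc (F : ℕ → ℂ) {N R : ℝ} (hN : 0 ≤ N) (hR : 0 ≤ R) :
    ∑ᶠ n ∈ {n : ℕ | N < (n : ℝ) ∧ (n : ℝ) ≤ R}, F n = ∑ n ∈ Finset.Ioc ⌊N⌋₊ ⌊R⌋₊, F n := by
  rw [← finsum_mem_coe_finset]
  congr 1
  ext n
  simp only [Set.mem_setOf_eq, Finset.coe_Ioc, Set.mem_Ioc]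
  rw [Nat.floor_lt hN, Nat.le_floor_iff hR]

lemma abs_sum_conj (s : Finset ℕ) (Λc : ℕ → ℝ) (φ : ℕ → ℝ) :
    ‖∑ n ∈ s, (Λc n : ℂ) * e (-(φ n))‖ =
      ‖∑ n ∈ s, (Λc n : ℂ) * e (φ n)‖ := by
  rw [← Complex.norm_conj (∑ n ∈ s, (Λc n : ℂ) * e (φ n))]
  congr 1
  rw [map_sum]
  apply Finset.sum_congr rfl
  intro n _
  rw [map_mul, conj_e, Complex.conj_ofReal]

end Aux
set_option maxHeartbeats 1000000 in
theorem stmt_16 (c θ : ℝ) (hc₁ : 1 < c) (hc₂ : c < 12 / 11) (hθ : 1 < θ)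
    (m : ℝ → ℝ → ℝ)
    (hm : ∀ x : ℝ, 2 ≤ x → ∀ t ∈ Set.Icc (g c θ (Δ₁ x)) (g c θ (Δ₂ x)),
      m x t ∈ Set.Icc (Δ₁ x) (Δ₂ x) ∧ g c θ (m x t) = t) :
    ∃ C : ℝ, 0 < C ∧
      ∀ x : ℝ, 2 ≤ x → ∀ N : ℝ, g c θ (Δ₁ x) ≤ N → 2 * N + 1 ≤ g c θ (Δ₂ x) →
        ∀ h : ℤ, 1 ≤ h →
          ‖∑ᶠ n ∈ {n : ℕ | N < (n : ℝ) ∧ (n : ℝ) ≤ 2 * N},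
              (ArithmeticFunction.vonMangoldt n : ℂ) *
                (e (-(h : ℝ) * m x ((n : ℝ) + 1)) - e (-(h : ℝ) * m x (n : ℝ)))‖ ≤
            C * (h : ℝ) * N ^ (1 / c - 1) *
              ⨆ N₁ ∈ Set.Icc N (2 * N),
                ‖∑ᶠ n ∈ {n : ℕ | N < (n : ℝ) ∧ (n : ℝ) ≤ N₁},
                  (ArithmeticFunction.vonMangoldt n : ℂ) * e ((h : ℝ) * m x (n : ℝ))‖ := by
  refine ⟨2 * π * Real.exp 1 * (2:ℝ) ^ θ, by positivity, ?_⟩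
  intro x hx N hN1 hN2 h hh
  have hπ : (0:ℝ) < π := Real.pi_pos
  have hh1 : (1:ℝ) ≤ (h:ℝ) := by exact_mod_cast hh
  have hh0 : (0:ℝ) ≤ (h:ℝ) := by linarith
  have hΔ1pos : 0 < Δ₁ x := Real.exp_pos _
  have hΔ1one : 1 ≤ Δ₁ x := by
    rw [Δ₁]
    apply Real.one_le_exp
    have hk : (0:ℤ) ≤ ⌊Real.log x / π⌋ := Int.floor_nonneg.2
      (div_nonneg (Real.log_nonneg (by linarith)) hπ.le)
    have hk' : (0:ℝ) ≤ (⌊Real.log x / π⌋ : ℝ) := by exact_mod_cast hk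
    have harc : (0:ℝ) ≤ Real.arctan 1 := by rw [Real.arctan_one]; positivity
    nlinarith
  have hgΔ₁ : g c θ (Δ₁ x) = (Δ₁ x) ^ c := by
    rw [g, tan_log_Δ₁, Real.one_rpow, mul_one]
  have hN1' : (1:ℝ) ≤ N := by
    refine le_trans ?_ hN1
    rw [hgΔ₁]
    exact Real.one_le_rpow hΔ1one (by linarith)
  have hNpos : (0:ℝ) < N := by linarith
  set a := ⌊N⌋₊ with ha
  set b := ⌊2*N⌋₊ with hb
  have haN : (a:ℝ) ≤ N := Nat.floor_le hNpos.le
  have hbN : (b:ℝ) ≤ 2*N := Nat.floor_le (by linarith)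
  have hNa : N < (a:ℝ) + 1 := Nat.lt_floor_add_one N
  have hab : a < b := by
    have h1 : a + 1 = ⌊N + 1⌋₊ := by
      rw [ha, Nat.floor_add_one hNpos.le]
    have h2 : ⌊N+1⌋₊ ≤ b := Nat.floor_mono (by linarith)
    omega
  -- integer domain facts
  set μ : ℕ → ℝ := fun n => m x (n : ℝ) with hμdef
  have hdom : ∀ n : ℕ, a < n → (n:ℝ) ≤ 2*N+1 →
      (n:ℝ) ∈ Set.Icc (g c θ (Δ₁ x)) (g c θ (Δ₂ x)) := by
    intro n hn hn2
    have hNn : N < (n:ℝ) := (Nat.floor_lt hNpos.le).1 hn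
    exact ⟨by linarith, by linarith⟩
  have hμmem : ∀ n : ℕ, a < n → (n:ℝ) ≤ 2*N+1 →
      (μ n ∈ Set.Icc (Δ₁ x) (Δ₂ x) ∧ g c θ (μ n) = (n:ℝ)) :=
    fun n hn hn2 => hm x hx (n:ℝ) (hdom n hn hn2)
  have hord : ∀ p q : ℕ, a < p → p < q → (q:ℝ) ≤ 2*N+1 → μ p < μ q := by
    intro p q hp hpq hq
    have hpq' : (p:ℝ) < (q:ℝ) := by exact_mod_cast hpq
    have hp2 : (p:ℝ) ≤ 2*N+1 := by linarith
    obtain ⟨hpmem, hpeq⟩ := hμmem p hp hp2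
    obtain ⟨hqmem, hqeq⟩ := hμmem q (lt_trans hp hpq) hq
    by_contra hle
    push_neg at hle
    rcases lt_or_eq_of_le hle with hlt | heq
    · have := g_gap hc₁ hθ hqmem.1 hpmem.2 hlt
      rw [hpeq, hqeq] at this
      have hpos : 0 < c * (Δ₁ x)^(c-1) * (μ p - μ q) := by
        apply mul_pos (by positivity)
        linarith
      linarith
    · rw [← heq] at hpeq
      rw [hpeq] at hqeq
      linarith
  set dd : ℕ → ℝ := fun n => μ (n+1) - μ n with hdddef
  have hcast1 : ∀ n : ℕ, ((n+1 : ℕ):ℝ) = (n:ℝ)+1 := by intro n; push_cast; ring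
  have hdd_pos : ∀ n : ℕ, a < n → (n:ℝ)+1 ≤ 2*N+1 → 0 < dd n := by
    intro n hn hn2
    have := hord n (n+1) hn (Nat.lt_succ_self n) (by rw [hcast1]; linarith)
    simp only [hdddef]
    linarith
  have hdd_le : ∀ n : ℕ, a < n → (n:ℝ)+1 ≤ 2*N+1 →
      dd n ≤ 1/(c*(Δ₁ x)^(c-1)) := by
    intro n hn hn2
    obtain ⟨hnmem, hneq⟩ := hμmem n hn (by linarith)
    obtain ⟨hn1mem, hn1eq⟩ := hμmem (n+1) (by omega) (by rw [hcast1]; linarith)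
    have hlt : μ n < μ (n+1) := hord n (n+1) hn (Nat.lt_succ_self n) (by rw [hcast1]; linarith)
    have := g_gap hc₁ hθ hnmem.1 hn1mem.2 hlt
    rw [hneq, hn1eq, hcast1] at this
    rw [le_div_iff₀ (by positivity : (0:ℝ) < c*(Δ₁ x)^(c-1))]
    simp only [hdddef]
    nlinarith
  have hdd_mono : ∀ n : ℕ, a < n → (n:ℝ)+2 ≤ 2*N+1 → dd (n+1) ≤ dd n := by
    intro n hn hn2
    have hcast2 : ((n+2 : ℕ):ℝ) = (n:ℝ)+2 := by push_cast; ring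
    obtain ⟨h0mem, h0eq⟩ := hμmem n hn (by linarith)
    obtain ⟨h1mem, h1eq⟩ := hμmem (n+1) (by omega) (by rw [hcast1]; linarith)
    obtain ⟨h2mem, h2eq⟩ := hμmem (n+2) (by omega) (by rw [hcast2]; linarith)
    by_contra hcon
    push_neg at hcon
    -- hcon : dd n < dd (n+1), i.e. μ(n+1) - μ n < μ(n+2) - μ(n+1)
    have hw : μ (n+1) < (μ n + μ (n+2))/2 := by
      simp only [hdddef] at hcon
      linarith
    have h02 : μ n ≤ μ (n+2) :=
      (hord n (n+2) hn (by omega) (by rw [hcast2]; linarith)).le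
    have hmid := g_mid hc₁ hθ h0mem.1 h02 h2mem.2
    rw [h0eq, h2eq, hcast2] at hmid
    have hwmem2 : (μ n + μ (n+2))/2 ≤ Δ₂ x := by
      have := h2mem.2
      have := h0mem.2
      linarith
    have hgap := g_gap hc₁ hθ h1mem.1 hwmem2 hw
    rw [h1eq, hcast1] at hgap
    have hpos : 0 < c * (Δ₁ x)^(c-1) * ((μ n + μ (n+2))/2 - μ (n+1)) := by
      apply mul_pos (by positivity)
      linarith
    linarith
  -- the exponential-sum pieces
  set Λ : ℕ → ℝ := fun n => ArithmeticFunction.vonMangoldt n with hΛdef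
  set f : ℕ → ℂ := fun n => (Λ n : ℂ) * e (-(h:ℝ) * μ n) with hfdef
  set W : ℕ → ℂ := fun n => e (-(h:ℝ) * dd n) - 1 with hWdef
  -- rewrite the LHS finsum as a Finset sum of f n * W n
  have hLHS : (∑ᶠ n ∈ {n : ℕ | N < (n : ℝ) ∧ (n : ℝ) ≤ 2 * N},
      (ArithmeticFunction.vonMangoldt n : ℂ) *
        (e (-(h : ℝ) * m x ((n : ℝ) + 1)) - e (-(h : ℝ) * m x (n : ℝ))))
      = ∑ n ∈ Finset.Ioc a b, f n * W n := by
    rw [finsum_eq_sum_Ioc _ hNpos.le (by linarith : (0:ℝ) ≤ 2*N)]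
    apply Finset.sum_congr rfl
    intro n hn
    rw [Finset.mem_Ioc] at hn
    have hmu1 : m x ((n:ℝ)+1) = μ (n+1) := by
      simp only [hμdef]
      rw [hcast1]
    have key : e (-(h:ℝ) * μ n) * (e (-(h:ℝ) * dd n) - 1)
        = e (-(h:ℝ) * μ (n+1)) - e (-(h:ℝ) * μ n) := by
      rw [mul_sub, mul_one, ← e_add]
      congr 2
      simp only [hdddef]
      ring
    simp only [hfdef, hWdef, hΛdef]
    rw [mul_assoc, key, hmu1]
  rw [hLHS]
  -- bounding the partial sums by the sup
  have hBle : ∀ N₁ : ℝ, N₁ ∈ Set.Icc N (2*N) →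
      ‖∑ᶠ n ∈ {n : ℕ | N < (n : ℝ) ∧ (n : ℝ) ≤ N₁},
        (ArithmeticFunction.vonMangoldt n : ℂ) * e ((h : ℝ) * m x (n : ℝ))‖
      ≤ ∑ n ∈ Finset.Ioc a b, Λ n := by
    intro N₁ hN₁
    have hN₁0 : (0:ℝ) ≤ N₁ := le_trans hNpos.le hN₁.1
    rw [finsum_eq_sum_Ioc _ hNpos.le hN₁0]
    calc ‖∑ n ∈ Finset.Ioc a ⌊N₁⌋₊, (ArithmeticFunction.vonMangoldt n : ℂ)
          * e ((h : ℝ) * m x (n : ℝ))‖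
        ≤ ∑ n ∈ Finset.Ioc a ⌊N₁⌋₊, ‖(ArithmeticFunction.vonMangoldt n : ℂ)
          * e ((h : ℝ) * m x (n : ℝ))‖ := norm_sum_le _ _
      _ = ∑ n ∈ Finset.Ioc a ⌊N₁⌋₊, Λ n := by
          apply Finset.sum_congr rfl
          intro n _
          rw [norm_mul, abs_e, mul_one, Complex.norm_real, Real.norm_eq_abs,
            abs_of_nonneg ArithmeticFunction.vonMangoldt_nonneg]
      _ ≤ ∑ n ∈ Finset.Ioc a b, Λ n := by
          apply Finset.sum_le_sum_of_subset_of_nonneg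
          · exact Finset.Ioc_subset_Ioc_right (Nat.floor_mono hN₁.2)
          · intro n _ _
            exact ArithmeticFunction.vonMangoldt_nonneg
  have hB₀ : 0 ≤ ∑ n ∈ Finset.Ioc a b, Λ n :=
    Finset.sum_nonneg (fun n _ => ArithmeticFunction.vonMangoldt_nonneg)
  have hrange : BddAbove (Set.range (fun N₁ : ℝ =>
      ⨆ _ : N₁ ∈ Set.Icc N (2*N),
        ‖∑ᶠ n ∈ {n : ℕ | N < (n : ℝ) ∧ (n : ℝ) ≤ N₁},
          (ArithmeticFunction.vonMangoldt n : ℂ) * e ((h : ℝ) * m x (n : ℝ))‖)) := by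
    refine ⟨∑ n ∈ Finset.Ioc a b, Λ n, ?_⟩
    rintro v ⟨N₁, rfl⟩
    dsimp only
    by_cases hmem : N₁ ∈ Set.Icc N (2*N)
    · rw [ciSup_pos hmem]
      exact hBle N₁ hmem
    · rw [ciSup_neg hmem, Real.sSup_empty]
      exact hB₀
  set M : ℝ := ⨆ N₁ ∈ Set.Icc N (2 * N),
      ‖∑ᶠ n ∈ {n : ℕ | N < (n : ℝ) ∧ (n : ℝ) ≤ N₁},
        (ArithmeticFunction.vonMangoldt n : ℂ) * e ((h : ℝ) * m x (n : ℝ))‖ with hMdef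
  have hkey : ∀ N₁ : ℝ, N₁ ∈ Set.Icc N (2*N) →
      ‖∑ᶠ n ∈ {n : ℕ | N < (n : ℝ) ∧ (n : ℝ) ≤ N₁},
        (ArithmeticFunction.vonMangoldt n : ℂ) * e ((h : ℝ) * m x (n : ℝ))‖ ≤ M := by
    intro N₁ hmem
    have hthis := le_ciSup hrange N₁
    rwa [ciSup_pos hmem] at hthis
  have hM0 : 0 ≤ M := by
    have hNmem : N ∈ Set.Icc N (2*N) := ⟨le_refl N, by linarith⟩
    have hle := hkey N hNmem
    have hempty : {n : ℕ | N < (n : ℝ) ∧ (n : ℝ) ≤ N} = (∅ : Set ℕ) := by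
      ext n; simp only [Set.mem_setOf_eq, Set.mem_empty_iff_false, iff_false]
      rintro ⟨h1, h2⟩; linarith
    rw [hempty] at hle
    simpa using hle
  have hS : ∀ k : ℕ, a < k → k ≤ b →
      ‖∑ n ∈ Finset.Ioc a k, f n‖ ≤ M := by
    intro k hk1 hk2
    have hkN : N < (k:ℝ) := (Nat.floor_lt hNpos.le).1 hk1
    have hkb : (k:ℝ) ≤ 2*N := le_trans (by exact_mod_cast hk2) hbN
    have hkmem : (k:ℝ) ∈ Set.Icc N (2*N) := ⟨hkN.le, hkb⟩
    have hle := hkey ((k:ℕ):ℝ) hkmem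
    have heq : ‖∑ᶠ n ∈ {n : ℕ | N < (n : ℝ) ∧ (n : ℝ) ≤ ((k:ℕ):ℝ)},
        (ArithmeticFunction.vonMangoldt n : ℂ) * e ((h : ℝ) * m x (n : ℝ))‖
        = ‖∑ n ∈ Finset.Ioc a k, (Λ n : ℂ) * e ((h:ℝ) * μ n)‖ := by
      rw [finsum_eq_sum_Ioc _ hNpos.le (by positivity : (0:ℝ) ≤ ((k:ℕ):ℝ)), Nat.floor_natCast]
    have hconj : ‖∑ n ∈ Finset.Ioc a k, f n‖
        = ‖∑ n ∈ Finset.Ioc a k, (Λ n : ℂ) * e ((h:ℝ) * μ n)‖ := by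
      simp only [hfdef, neg_mul]
      exact abs_sum_conj _ _ _
    rw [hconj, ← heq]
    exact hle
  -- bounds on W
  have hWd : ∀ k : ℕ, a < k → k < b →
      ‖W k - W (k+1)‖ ≤ (2*π*(h:ℝ)) * (dd k - dd (k+1)) := by
    intro k hk1 hk2
    have hkb : (k:ℝ)+1 ≤ (b:ℝ) := by exact_mod_cast hk2
    have hmono := hdd_mono k hk1 (by linarith)
    have hWeq : W k - W (k+1) = e (-(h:ℝ) * dd k) - e (-(h:ℝ) * dd (k+1)) := by
      simp only [hWdef]; ring
    rw [hWeq]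
    calc ‖e (-(h:ℝ) * dd k) - e (-(h:ℝ) * dd (k+1))‖
        ≤ 2*π*|(-(h:ℝ) * dd k) - (-(h:ℝ) * dd (k+1))| := abs_e_sub_e _ _
      _ = (2*π*(h:ℝ)) * (dd k - dd (k+1)) := by
          rw [show (-(h:ℝ) * dd k) - (-(h:ℝ) * dd (k+1)) = -((h:ℝ) * (dd k - dd (k+1))) by ring,
            abs_neg, abs_of_nonneg (by nlinarith : (0:ℝ) ≤ (h:ℝ) * (dd k - dd (k+1)))]
          ring
  have hWb : ‖W b‖ ≤ (2*π*(h:ℝ)) * dd b := by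
    have hbpos := hdd_pos b hab (by linarith)
    simp only [hWdef]
    calc ‖e (-(h:ℝ) * dd b) - 1‖
        ≤ 2*π*|(-(h:ℝ) * dd b)| := abs_e_sub_one _
      _ = (2*π*(h:ℝ)) * dd b := by
          rw [show (-(h:ℝ) * dd b) = -((h:ℝ) * dd b) by ring, abs_neg,
            abs_of_nonneg (by nlinarith : (0:ℝ) ≤ (h:ℝ) * dd b)]
          ring
  -- apply Abel estimate
  have habel := abel_est f W dd a b hab M (2*π*(h:ℝ)) (by positivity) hS hWd hWb
  refine le_trans habel ?_
  -- final constant computation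
  have hdda1 : dd (a+1) ≤ 1/(c*(Δ₁ x)^(c-1)) := by
    apply hdd_le (a+1) (Nat.lt_succ_self a)
    rw [hcast1]
    linarith
  have hdda1pos : 0 < dd (a+1) := by
    apply hdd_pos (a+1) (Nat.lt_succ_self a)
    rw [hcast1]
    linarith
  have hce := const_est (x := x) hc₁ hc₂ hθ hNpos (by linarith : N ≤ g c θ (Δ₂ x))
  have key : 2*π*(h:ℝ) * dd (a+1) ≤ 2*π*Real.exp 1*(2:ℝ)^θ * (h:ℝ) * N^(1/c-1) := by
    have k1 : 2*π*(h:ℝ) * dd (a+1) ≤ 2*π*(h:ℝ) * (1/(c*(Δ₁ x)^(c-1))) :=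
      mul_le_mul_of_nonneg_left hdda1 (by positivity)
    have k2 := mul_le_mul_of_nonneg_left hce hh0
    nlinarith [k1, k2]
  calc 2*π*(h:ℝ) * dd (a+1) * M ≤ (2*π*Real.exp 1*(2:ℝ)^θ * (h:ℝ) * N^(1/c-1)) * M :=
        mul_le_mul_of_nonneg_right key hM0
    _ = 2*π*Real.exp 1*(2:ℝ)^θ * (h:ℝ) * N^(1/c-1) * M := by ring
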